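/- arXiv:1411.3035 — 3 statements merged into one kernel-verified Lean document; each statement's English description precedes it below -/
import Mathlib

section
/- In a symmetric monoidal category C satisfying the Causality axiom, every distinguishable family of states is copiable: if the states {ρ_x : I ⟶ A}_{x∈X} are distinguishable, then there exists a gate C : A ⟶ A ⊗ A such that ρ_x ≫ C = λ_I⁻¹ ≫ (ρ_x ⊗ ρ_x) for every x ∈ X. -/
open CategoryTheory CategoryTheory.Limits MonoidalCategory

universe v u

/-- A family of states `ρ : X → (𝟙_ C ⟶ A)` of an object `A` is (perfectly)
distinguishable iff for every pair of objects `B, B'` and every indexed family of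
gates `G : X → (B ⟶ B')` there is a gate `W : A ⊗ B ⟶ B'` such that
`(λ_ B).inv ≫ (ρ x ⊗ 𝟙 B) ≫ W = G x` for every `x`. -/
def Distinguishable {C : Type u} [Category.{v} C] [MonoidalCategory C]
    {X : Type} {A : C} (ρ : X → (𝟙_ C ⟶ A)) : Prop :=
  ∀ (B B' : C) (G : X → (B ⟶ B')),
    ∃ W : A ⊗ B ⟶ B', ∀ x : X, (λ_ B).inv ≫ (ρ x ⊗ₘ 𝟙 B) ≫ W = G x

/-- A family of states `ρ : X → (𝟙_ C ⟶ A)` is copiable iff there is a gate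
`c : A ⟶ A ⊗ A` with `ρ x ≫ c = (λ_ (𝟙_ C)).inv ≫ (ρ x ⊗ ρ x)` for every `x`. -/
def Copiable {C : Type u} [Category.{v} C] [MonoidalCategory C]
    {X : Type} {A : C} (ρ : X → (𝟙_ C ⟶ A)) : Prop :=
  ∃ c : A ⟶ A ⊗ A, ∀ x : X, ρ x ≫ c = (λ_ (𝟙_ C)).inv ≫ (ρ x ⊗ₘ ρ x)

/-- Every distinguishable family of states is copiable. -/
theorem copiable_of_distinguishable {C : Type u} [Category.{v} C] [MonoidalCategory C]
    [SymmetricCategory C] (hCaus : IsTerminal (𝟙_ C))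
    {X : Type} {A : C} (ρ : X → (𝟙_ C ⟶ A))
    (hdist : Distinguishable ρ) :
    Copiable ρ := by
  obtain ⟨W, hW⟩ := hdist (𝟙_ C) (A ⊗ A)
    (fun x => (λ_ (𝟙_ C)).inv ≫ (ρ x ⊗ₘ ρ x))
  refine ⟨(ρ_ A).inv ≫ W, fun x => ?_⟩
  have h : ρ x ≫ (ρ_ A).inv = (ρ_ (𝟙_ C)).inv ≫ (ρ x ⊗ₘ 𝟙 (𝟙_ C)) := by
    simp
  calc ρ x ≫ (ρ_ A).inv ≫ W
      = (ρ x ≫ (ρ_ A).inv) ≫ W := by rw [Category.assoc]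
    _ = ((λ_ (𝟙_ C)).inv ≫ (ρ x ⊗ₘ 𝟙 (𝟙_ C))) ≫ W := by
        rw [h, unitors_inv_equal]
    _ = (λ_ (𝟙_ C)).inv ≫ (ρ x ⊗ₘ ρ x) := by rw [Category.assoc]; exact hW x
end

section
/- In a symmetric monoidal category C satisfying the Causality axiom, let {ρ_x : I ⟶ A}_{x∈X} be a family of states, let C : A ⟶ A ⊗ E be a gate, and let {η_x : I ⟶ E}_{x∈X} be states such that ρ_x ≫ C = λ_I⁻¹ ≫ (ρ_x ⊗ η_x) for every x ∈ X. Then for every n ≥ 1 there exists a gate D_n : A ⟶ E^{⊗n} (where E^{⊗n} denotes the n-fold tensor power of E) such that ρ_x ≫ D_n = η_x^{⊗n} for every x ∈ X, where η_x^{⊗n} : I ⟶ E^{⊗n} denotes the n-fold tensor product state obtained from η_x (using the unitor isomorphism I ≅ I ⊗ ⋯ ⊗ I). -/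
open CategoryTheory CategoryTheory.Limits MonoidalCategory

universe v u

variable {C : Type u} [Category.{v} C] [MonoidalCategory C]

/-- The `n`-fold tensor power of an object. -/
def tensorPow (A : C) : ℕ → C
  | 0 => 𝟙_ C
  | n + 1 => tensorPow A n ⊗ A

/-- The `n`-fold tensor power of a state `σ : 𝟙_ C ⟶ A`, a state of `tensorPow A n`
(using the unitor isomorphism `𝟙_ C ≅ 𝟙_ C ⊗ ⋯ ⊗ 𝟙_ C`). -/
def statePow {A : C} (σ : 𝟙_ C ⟶ A) : (n : ℕ) → (𝟙_ C ⟶ tensorPow A n)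
  | 0 => 𝟙 (𝟙_ C)
  | n + 1 => (λ_ (𝟙_ C)).inv ≫ (statePow σ n ⊗ₘ σ)

/-- If a gate `c : A ⟶ A ⊗ E` generates the side information `η x` on the states
`ρ x`, then for every `n ≥ 1` there is a gate `D : A ⟶ E^{⊗ n}` with
`ρ x ≫ D = (η x)^{⊗ n}` for every `x`. -/
theorem exists_gate_to_statePow [SymmetricCategory C]
    (hCaus : IsTerminal (𝟙_ C))
    {X : Type} {A E : C} (ρ : X → (𝟙_ C ⟶ A)) (c : A ⟶ A ⊗ E)
    (η : X → (𝟙_ C ⟶ E))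
    (hc : ∀ x : X, ρ x ≫ c = (λ_ (𝟙_ C)).inv ≫ (ρ x ⊗ₘ η x)) :
    ∀ n : ℕ, 1 ≤ n → ∃ D : A ⟶ tensorPow E n, ∀ x : X, ρ x ≫ D = statePow (η x) n := by
  have key : ∀ n : ℕ, ∃ D : A ⟶ tensorPow E n, ∀ x : X, ρ x ≫ D = statePow (η x) n := by
    intro n
    induction n with
    | zero => exact ⟨hCaus.from A, fun x => hCaus.hom_ext _ _⟩
    | succ n ih =>
      obtain ⟨D, hD⟩ := ih
      refine ⟨c ≫ (D ⊗ₘ 𝟙 E), fun x => ?_⟩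
      show ρ x ≫ (c ≫ (D ⊗ₘ 𝟙 E) : A ⟶ tensorPow E n ⊗ E) = statePow (η x) (n + 1)
      rw [← Category.assoc, hc x, Category.assoc, tensorHom_comp_tensorHom, hD, Category.comp_id]
      rfl
  exact fun n _ => key n
end

section
/- In a symmetric monoidal category C satisfying the Causality axiom, the tensor product of two pure states is a pure state: if α : I ⟶ A and β : I ⟶ B are pure states, then the state λ_I⁻¹ ≫ (α ⊗ β) : I ⟶ A ⊗ B is pure. -/
open CategoryTheory CategoryTheory.Limits MonoidalCategory

universe v u

variable {C : Type u} [Category.{v} C] [MonoidalCategory C]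

/-- A state `α : 𝟙_ C ⟶ A` is pure iff it has only trivial extensions: every state
`σ : 𝟙_ C ⟶ A ⊗ B` whose marginal on `A` (obtained by discarding `B` with the
trace `hCaus.from B`) equals `α` factors as `σ = (λ_ (𝟙_ C)).inv ≫ (α ⊗ β)` for
some state `β : 𝟙_ C ⟶ B`. -/
def IsPureState (hCaus : IsTerminal (𝟙_ C)) {A : C} (α : 𝟙_ C ⟶ A) : Prop :=
  ∀ (B : C) (σ : 𝟙_ C ⟶ A ⊗ B),
    σ ≫ (𝟙 A ⊗ₘ hCaus.from B) ≫ (ρ_ A).hom = α →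
      ∃ β : 𝟙_ C ⟶ B, σ = (λ_ (𝟙_ C)).inv ≫ (α ⊗ₘ β)

/-- Discarding `B ⊗ E` is the same as discarding `E` first and then `B`. -/
lemma aux_discard (hCaus : IsTerminal (𝟙_ C)) (A B E : C) :
    A ◁ hCaus.from (B ⊗ E) =
      A ◁ (B ◁ hCaus.from E) ≫ (α_ A B (𝟙_ C)).inv ≫ (ρ_ (A ⊗ B)).hom ≫ A ◁ hCaus.from B := by
  rw [← whiskerLeft_rightUnitor_assoc, ← MonoidalCategory.whiskerLeft_comp,
    ← MonoidalCategory.whiskerLeft_comp]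
  congr 1
  exact hCaus.hom_ext _ _

/-- Discarding on the two sides commutes (structural lemma). -/
lemma aux_exchange {A B E : C} (f : A ⟶ 𝟙_ C) (g : E ⟶ 𝟙_ C) :
    (α_ A B E).hom ≫ (f ⊗ₘ 𝟙 (B ⊗ E)) ≫ (λ_ (B ⊗ E)).hom ≫ (𝟙 B ⊗ₘ g) ≫ (ρ_ B).hom
      = (𝟙 (A ⊗ B) ⊗ₘ g) ≫ (ρ_ (A ⊗ B)).hom ≫ (f ⊗ₘ 𝟙 B) ≫ (λ_ B).hom := by
  simp only [MonoidalCategory.tensorHom_def, whisker_exchange_assoc, whisker_exchange, id_whiskerLeft,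
    MonoidalCategory.whiskerRight_id, MonoidalCategory.whiskerLeft_id, Category.assoc,
    Category.id_comp, Category.comp_id, Iso.inv_hom_id_assoc]
  simp [MonoidalCategory.tensorHom_def, whisker_exchange_assoc, whisker_exchange]
  rw [leftUnitor_tensor_hom]
  calc f ▷ B ▷ E ≫ (α_ (𝟙_ C) B E).hom ≫
        ((α_ (𝟙_ C) B E).inv ≫ (λ_ B).hom ▷ E) ≫ B ◁ g ≫ (ρ_ B).hom
      = ((f ▷ B ≫ (λ_ B).hom) ▷ E) ≫ B ◁ g ≫ (ρ_ B).hom := by simp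
    _ = (A ⊗ B) ◁ g ≫ (f ▷ B ≫ (λ_ B).hom) ▷ 𝟙_ C ≫ (ρ_ B).hom := by
        rw [← whisker_exchange_assoc]
    _ = (A ⊗ B) ◁ g ≫ (ρ_ (A ⊗ B)).hom ≫ f ▷ B ≫ (λ_ B).hom := by simp
    _ = (α_ A B E).hom ≫ A ◁ B ◁ g ≫ (α_ A B (𝟙_ C)).inv ≫ (ρ_ (A ⊗ B)).hom ≫
          f ▷ B ≫ (λ_ B).hom := by
        rw [associator_inv_naturality_right_assoc]
        simp

/-- Reassociating a triple product of states. -/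
lemma aux_reassoc {A B E : C} (α : 𝟙_ C ⟶ A) (β : 𝟙_ C ⟶ B) (γ : 𝟙_ C ⟶ E) :
    ((λ_ (𝟙_ C)).inv ≫ (α ⊗ₘ ((λ_ (𝟙_ C)).inv ≫ (β ⊗ₘ γ)))) ≫ (α_ A B E).inv
      = (λ_ (𝟙_ C)).inv ≫ (((λ_ (𝟙_ C)).inv ≫ (α ⊗ₘ β)) ⊗ₘ γ) := by
  have h1 : α ⊗ₘ ((λ_ (𝟙_ C)).inv ≫ (β ⊗ₘ γ)) = (𝟙 (𝟙_ C) ⊗ₘ (λ_ (𝟙_ C)).inv) ≫ (α ⊗ₘ (β ⊗ₘ γ)) := by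
    rw [tensorHom_comp_tensorHom, Category.id_comp]
  have h2 : ((λ_ (𝟙_ C)).inv ≫ (α ⊗ₘ β)) ⊗ₘ γ = ((λ_ (𝟙_ C)).inv ⊗ₘ 𝟙 (𝟙_ C)) ≫ ((α ⊗ₘ β) ⊗ₘ γ) := by
    rw [tensorHom_comp_tensorHom, Category.id_comp]
  rw [h1, h2, Category.assoc, Category.assoc, associator_inv_naturality,
    ← Category.assoc, ← Category.assoc, ← Category.assoc]
  congr 1
  coherence

/-- The tensor product of two pure states is a pure state. -/
theorem isPureState_tensor [SymmetricCategory C] (hCaus : IsTerminal (𝟙_ C))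
    {A B : C} (α : 𝟙_ C ⟶ A) (β : 𝟙_ C ⟶ B)
    (hα : IsPureState hCaus α) (hβ : IsPureState hCaus β) :
    IsPureState hCaus ((λ_ (𝟙_ C)).inv ≫ (α ⊗ₘ β)) := by
  intro E σ h
  have eA : α ≫ hCaus.from A = 𝟙 (𝟙_ C) := hCaus.hom_ext _ _
  have eB : β ≫ hCaus.from B = 𝟙 (𝟙_ C) := hCaus.hom_ext _ _
  have h' : σ ≫ (A ⊗ B) ◁ hCaus.from E ≫ (ρ_ (A ⊗ B)).hom = (λ_ (𝟙_ C)).inv ≫ (α ⊗ₘ β) := by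
    simpa only [id_tensorHom] using h
  -- the marginal of `σ ≫ (α_ A B E).hom` on `A` is `α`
  have key1 : (σ ≫ (α_ A B E).hom) ≫ (𝟙 A ⊗ₘ hCaus.from (B ⊗ E)) ≫ (ρ_ A).hom = α := by
    simp only [id_tensorHom, Category.assoc]
    rw [aux_discard hCaus A B E]
    simp only [Category.assoc]
    rw [associator_inv_naturality_right_assoc, Iso.hom_inv_id_assoc, reassoc_of% h',
      ← id_tensorHom, tensorHom_comp_tensorHom_assoc, eB, Category.comp_id]
    simp [← unitors_equal]
  obtain ⟨τ, hτ⟩ := hα (B ⊗ E) (σ ≫ (α_ A B E).hom) key1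
  -- extract `τ` by discarding `A`
  have hτ' : τ = σ ≫ (α_ A B E).hom ≫ (hCaus.from A ⊗ₘ 𝟙 (B ⊗ E)) ≫ (λ_ (B ⊗ E)).hom := by
    rw [← Category.assoc, hτ, Category.assoc, tensorHom_comp_tensorHom_assoc, eA, Category.comp_id]
    simp
  -- the marginal of `τ` on `B` is `β`
  have key2 : τ ≫ (𝟙 B ⊗ₘ hCaus.from E) ≫ (ρ_ B).hom = β := by
    rw [hτ']
    simp only [Category.assoc]
    rw [aux_exchange (hCaus.from A) (hCaus.from E)]
    simp only [← Category.assoc]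
    rw [Category.assoc σ, h]
    simp only [Category.assoc]
    rw [tensorHom_comp_tensorHom_assoc, eA, Category.comp_id]
    simp
  obtain ⟨γ, hγ⟩ := hβ E τ key2
  refine ⟨γ, ?_⟩
  have hσ : σ = ((λ_ (𝟙_ C)).inv ≫ (α ⊗ₘ τ)) ≫ (α_ A B E).inv := by
    rw [← hτ]; simp
  rw [hσ, hγ]
  exact aux_reassoc α β γ
end
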